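/- Let α, β ∈ ℤ^s be as above with supp(α₊) ∩ supp(β₋) = ∅, and set γ = α + β and δ = β₊ − α₋. Then x^{δ₊}·(x^{α₊} − x^{α₋}) + x^{δ₋}·(x^{β₊} − x^{β₋}) = x^{γ₊} − x^{γ₋}; in particular x^{γ₊} − x^{γ₋} lies in the ideal generated by x^{α₊} − x^{α₋} and x^{β₊} − x^{β₋}. -/
import Mathlib


open MvPolynomial

/-- For `v ∈ ℤ^s`, the monomial `x^{v₊}` with exponents the positive part of `v`. -/
noncomputable def posMonomial {s : ℕ} (K : Type*) [Field K] (v : Fin s → ℤ) :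
    MvPolynomial (Fin s) K :=
  ∏ i, X i ^ (v i).toNat

/-- For `v ∈ ℤ^s`, the binomial `x^{v₊} - x^{v₋}`. -/
noncomputable def binomOf {s : ℕ} (K : Type*) [Field K] (v : Fin s → ℤ) :
    MvPolynomial (Fin s) K :=
  posMonomial K v - posMonomial K (-v)

/-- `v` has both positive and negative entries. -/
def HasMixedSigns {s : ℕ} (v : Fin s → ℤ) : Prop :=
  (∃ i, 0 < v i) ∧ (∃ i, v i < 0)



private lemma prodpow_mul {s : ℕ} {K : Type*} [Field K] (e f : Fin s → ℕ) :
    (∏ i, (X i : MvPolynomial (Fin s) K) ^ e i) * ∏ i, (X i : MvPolynomial (Fin s) K) ^ f i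
      = ∏ i, (X i : MvPolynomial (Fin s) K) ^ (e i + f i) := by
  rw [← Finset.prod_mul_distrib]
  exact Finset.prod_congr rfl fun i _ => (pow_add _ _ _).symm

/-- With `α, β ∈ ℤ^s` each having positive and negative entries,
`γ = α + β` having positive and negative entries, and `supp(α₊) ∩ supp(β₋) = ∅`,
setting `δ = β₊ - α₋` we have the identity
`x^{δ₊}(x^{α₊} - x^{α₋}) + x^{δ₋}(x^{β₊} - x^{β₋}) = x^{γ₊} - x^{γ₋}`;
in particular `x^{γ₊} - x^{γ₋}` lies in the ideal `⟨x^{α₊} - x^{α₋}, x^{β₊} - x^{β₋}⟩`. -/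
theorem toric_splittings_stmt3 {s : ℕ} (K : Type*) [Field K] (α β : Fin s → ℤ)
    (hα : HasMixedSigns α) (hβ : HasMixedSigns β) (hγ : HasMixedSigns (α + β))
    (hsupp : ∀ i, ¬(0 < α i ∧ β i < 0))
    (δ : Fin s → ℤ) (hδ : δ = fun i => max (β i) 0 - max (-(α i)) 0) :
    posMonomial K δ * binomOf K α + posMonomial K (-δ) * binomOf K β
        = binomOf K (α + β) ∧
      binomOf K (α + β) ∈ Ideal.span {binomOf K α, binomOf K β} := by
  have key : posMonomial K δ * binomOf K α + posMonomial K (-δ) * binomOf K β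
      = binomOf K (α + β) := by
    unfold binomOf posMonomial
    simp only [Pi.neg_apply, Pi.add_apply, neg_neg]
    rw [mul_sub, mul_sub, prodpow_mul, prodpow_mul, prodpow_mul, prodpow_mul]
    have e1 : (∏ i, (X i : MvPolynomial (Fin s) K) ^ ((δ i).toNat + (α i).toNat))
        = ∏ i, (X i : MvPolynomial (Fin s) K) ^ ((α i + β i).toNat) :=
      Finset.prod_congr rfl fun i _ => by
        have := hsupp i; subst hδ; simp only; congr 1; omega
    have e2 : (∏ i, (X i : MvPolynomial (Fin s) K) ^ ((δ i).toNat + (-α i).toNat))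
        = ∏ i, (X i : MvPolynomial (Fin s) K) ^ ((-δ i).toNat + (β i).toNat) :=
      Finset.prod_congr rfl fun i _ => by
        have := hsupp i; subst hδ; simp only; congr 1; omega
    have e3 : (∏ i, (X i : MvPolynomial (Fin s) K) ^ ((-δ i).toNat + (-β i).toNat))
        = ∏ i, (X i : MvPolynomial (Fin s) K) ^ ((-(α i + β i)).toNat) :=
      Finset.prod_congr rfl fun i _ => by
        have := hsupp i; subst hδ; simp only; congr 1; omega
    rw [e1, e2, e3]
    ring
  refine ⟨key, ?_⟩
  rw [← key]
  exact Ideal.add_mem _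
    (Ideal.mul_mem_left _ _ (Ideal.subset_span (by simp)))
    (Ideal.mul_mem_left _ _ (Ideal.subset_span (by simp)))
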